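/- Let T be an unrooted tree with n vertices, each of degree at most 3, and let P be a restricted partition of T of order z (z ≥ 1): a partition of V(T) into connected subtrees, each with at most z vertices, such that any subtree with more than two boundary edges is a single vertex, and no two adjacent subtrees can be merged while preserving these properties. Then P has O(n/z) parts; concretely, at most c·(n/z + 1) parts for some absolute constant c. -/

import Mathlib

open scoped Classical

/-- The number of boundary edges of a vertex set `p` in the graph `T`:
edges with exactly one endpoint in `p`. -/
noncomputable def boundaryEdges {V : Type} [Fintype V] (T : SimpleGraph V)
    (p : Finset V) : ℕ :=
  (T.edgeFinset.filter fun e => ∃ u ∈ e, ∃ v ∈ e, u ∈ p ∧ v ∉ p).card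

/-- `P` is a restricted partition of order `z` of the tree `T`. -/
def IsRestrictedPartition {V : Type} [Fintype V] (T : SimpleGraph V)
    (z : ℕ) (P : Finset (Finset V)) : Prop :=
  (∀ v : V, ∃! p, p ∈ P ∧ v ∈ p) ∧
  (∀ p ∈ P, p.Nonempty) ∧
  (∀ p ∈ P, (T.induce (↑p : Set V)).Connected) ∧
  (∀ p ∈ P, p.card ≤ z) ∧
  (∀ p ∈ P, 2 < boundaryEdges T p → p.card = 1) ∧
  (∀ p ∈ P, ∀ q ∈ P, p ≠ q →
    (∃ u ∈ p, ∃ v ∈ q, T.Adj u v) →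
    ¬((p ∪ q).card ≤ z ∧ boundaryEdges T (p ∪ q) ≤ 2 ∧
        (T.induce (↑(p ∪ q) : Set V)).Connected))

namespace RPAux


open Finset SimpleGraph

variable {V : Type} [Fintype V] {T : SimpleGraph V}

noncomputable def Bset (T : SimpleGraph V) (p : Finset V) : Finset (Sym2 V) :=
  T.edgeFinset.filter fun e => ∃ u ∈ e, ∃ v ∈ e, u ∈ p ∧ v ∉ p

lemma boundaryEdges_eq (p : Finset V) : boundaryEdges T p = (Bset T p).card := rfl

lemma mem_Bset {p : Finset V} {e : Sym2 V} :
    e ∈ Bset T p ↔ e ∈ T.edgeFinset ∧ ∃ u ∈ e, ∃ v ∈ e, u ∈ p ∧ v ∉ p :=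
  Finset.mem_filter

lemma exists_of_mem_Bset {p : Finset V} {e : Sym2 V} (he : e ∈ Bset T p) :
    ∃ x y, e = s(x, y) ∧ T.Adj x y ∧ x ∈ p ∧ y ∉ p := by
  rw [mem_Bset] at he
  obtain ⟨hedge, hb⟩ := he
  induction e with
  | _ a b =>
    have hadj : T.Adj a b := by rwa [SimpleGraph.mem_edgeFinset, SimpleGraph.mem_edgeSet] at hedge
    obtain ⟨u, hu, v, hv, hup, hvp⟩ := hb
    rw [Sym2.mem_iff] at hu hv
    rcases hu with rfl | rfl <;> rcases hv with rfl | rfl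
    · exact absurd hup hvp
    · exact ⟨u, v, rfl, hadj, hup, hvp⟩
    · exact ⟨u, v, Sym2.eq_swap, hadj.symm, hup, hvp⟩
    · exact absurd hup hvp

lemma mem_Bset_of_adj {p : Finset V} {x y : V} (hadj : T.Adj x y) (hx : x ∈ p) (hy : y ∉ p) :
    s(x, y) ∈ Bset T p := by
  rw [mem_Bset]
  exact ⟨SimpleGraph.mem_edgeFinset.2 hadj, x, Sym2.mem_mk_left x y, y, Sym2.mem_mk_right x y,
    hx, hy⟩

lemma bset_singleton_card (v : V) : boundaryEdges T {v} = T.degree v := by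
  classical
  rw [boundaryEdges_eq, ← SimpleGraph.card_incidenceFinset_eq_degree]
  congr 1
  ext e
  rw [mem_Bset, SimpleGraph.mem_incidenceFinset]
  constructor
  · rintro ⟨he, u, hu, w, hw, hup, hwp⟩
    simp only [Finset.mem_singleton] at hup hwp
    subst hup
    exact ⟨SimpleGraph.mem_edgeFinset.1 he, hu⟩
  · rintro ⟨he, hv⟩
    refine ⟨SimpleGraph.mem_edgeFinset.2 he, v, hv, ?_⟩
    induction e with
    | _ a b =>
      have hab : a ≠ b := (T.mem_edgeSet.1 he).ne
      rw [Sym2.mem_iff] at hv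
      rcases hv with rfl | rfl
      · exact ⟨b, Sym2.mem_mk_right _ _, Finset.mem_singleton_self _, by simpa using hab.symm⟩
      · exact ⟨a, Sym2.mem_mk_left _ _, Finset.mem_singleton_self _, by simpa using hab⟩

lemma b_le_three (hdeg : ∀ v : V, T.degree v ≤ 3) {p : Finset V}
    (hbd : 2 < boundaryEdges T p → p.card = 1) :
    boundaryEdges T p ≤ 3 := by
  by_cases h : 2 < boundaryEdges T p
  · obtain ⟨v, rfl⟩ := Finset.card_eq_one.1 (hbd h)
    rw [bset_singleton_card]; exact hdeg v
  · omega



lemma isAcyclic_induce (hacyc : T.IsAcyclic) (s : Set V) : (T.induce s).IsAcyclic := by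
  intro v c hc
  have hinj : Function.Injective ((SimpleGraph.Embedding.induce (G := T) s).toHom) :=
    Subtype.val_injective
  exact hacyc (c.map (SimpleGraph.Embedding.induce (G := T) s).toHom) (hc.map hinj)

lemma card_intra (hacyc : T.IsAcyclic) (p : Finset V)
    (hconn : (T.induce (↑p : Set V)).Connected) :
    (T.edgeFinset.filter fun e => ∀ x ∈ e, x ∈ p).card + 1 = p.card := by
  classical
  have htree : (T.induce (↑p : Set V)).IsTree := ⟨hconn, isAcyclic_induce hacyc _⟩
  have hcard := htree.card_edgeFinset
  have hcoe : Fintype.card ↥(↑p : Set V) = p.card := by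
    rw [← Fintype.card_coe p]
    exact Fintype.card_congr (Equiv.subtypeEquivRight (by simp))
  rw [hcoe] at hcard
  rw [← hcard]
  congr 1
  refine (Finset.card_bij (fun e _ => Sym2.map Subtype.val e) ?_ ?_ ?_).symm
  · intro e he
    induction e with
    | _ a b =>
      have hadj : (T.induce (↑p : Set V)).Adj a b := by
        rwa [SimpleGraph.mem_edgeFinset, SimpleGraph.mem_edgeSet] at he
      have hadj' : T.Adj a.1 b.1 := hadj
      rw [Finset.mem_filter]
      refine ⟨SimpleGraph.mem_edgeFinset.2 hadj', ?_⟩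
      intro x hx
      simp only [Sym2.map_pair_eq, Sym2.mem_iff] at hx
      rcases hx with rfl | rfl
      · exact a.2
      · exact b.2
  · intro e₁ h₁ e₂ h₂ h
    exact Sym2.map.injective Subtype.val_injective h
  · intro e he
    rw [Finset.mem_filter] at he
    obtain ⟨hedge, hin⟩ := he
    induction e with
    | _ a b =>
      have hadj : T.Adj a b := by
        rwa [SimpleGraph.mem_edgeFinset, SimpleGraph.mem_edgeSet] at hedge
      have ha : a ∈ p := hin a (Sym2.mem_mk_left _ _)
      have hb : b ∈ p := hin b (Sym2.mem_mk_right _ _)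
      have hadj' : (T.induce (↑p : Set V)).Adj ⟨a, by simpa using ha⟩ ⟨b, by simpa using hb⟩ :=
        hadj
      refine ⟨s(⟨a, by simpa using ha⟩, ⟨b, by simpa using hb⟩), ?_, ?_⟩
      · rwa [SimpleGraph.mem_edgeFinset, SimpleGraph.mem_edgeSet]
      · simp [Sym2.map_pair_eq]

lemma induce_union_connected_of_adj {p q : Finset V}
    (hp : (T.induce (↑p : Set V)).Connected) (hq : (T.induce (↑q : Set V)).Connected)
    {u v : V} (hu : u ∈ p) (hv : v ∈ q) (huv : T.Adj u v) :
    (T.induce (↑(p ∪ q) : Set V)).Connected := by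
  rw [SimpleGraph.connected_induce_iff] at hp hq ⊢
  have h := SimpleGraph.Subgraph.connected_induce_top_sup hp.preconnected hq.preconnected (by simpa using hu) (by simpa using hv) huv
  refine h.mono ?_ ?_
  · refine sup_le (sup_le ?_ ?_) ?_
    · refine SimpleGraph.Subgraph.induce_mono le_rfl ?_
      intro x hx
      simp only [Set.mem_insert_iff, Set.mem_singleton_iff] at hx
      rcases hx with rfl | rfl
      · simp [hu]
      · simp [hv]
    · exact SimpleGraph.Subgraph.induce_mono le_rfl (by simp)
    · exact SimpleGraph.Subgraph.induce_mono le_rfl (by simp)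
  · ext x
    simp only [SimpleGraph.Subgraph.verts_sup, SimpleGraph.Subgraph.induce_verts,
      Set.mem_union, Set.mem_insert_iff, Set.mem_singleton_iff, Finset.coe_union,
      Finset.mem_coe]
    constructor
    · rintro (((rfl | rfl) | h) | h)
      · exact Or.inl hu
      · exact Or.inr hv
      · exact Or.inl h
      · exact Or.inr h
    · tauto



lemma merge_bound {z : ℕ} {P : Finset (Finset V)}
    (hRP : IsRestrictedPartition T z P) {p q : Finset V}
    (hp : p ∈ P) (hq : q ∈ P) (hpq : p ≠ q) {u v : V}
    (hu : u ∈ p) (hv : v ∈ q) (huv : T.Adj u v)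
    (hb4 : boundaryEdges T p + boundaryEdges T q ≤ 4) :
    z < p.card + q.card := by
  obtain ⟨huniq, hne, hconn, hcard, hbd, hmax⟩ := hRP
  have hdisj : Disjoint p q := by
    rw [Finset.disjoint_left]
    intro x hxp hxq
    exact hpq ((huniq x).unique ⟨hp, hxp⟩ ⟨hq, hxq⟩)
  have hvnp : v ∉ p := fun h => Finset.disjoint_left.1 hdisj h hv
  have hunq : u ∉ q := fun h => Finset.disjoint_left.1 hdisj hu h
  have he0p : s(u, v) ∈ Bset T p := mem_Bset_of_adj huv hu hvnp
  have he0q : s(u, v) ∈ Bset T q := by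
    rw [mem_Bset]
    exact ⟨SimpleGraph.mem_edgeFinset.2 huv, v, Sym2.mem_mk_right u v, u, Sym2.mem_mk_left u v,
      hv, hunq⟩
  -- boundary of the union is at most 2
  have h1 : Bset T (p ∪ q) ⊆ (Bset T p ∪ Bset T q).erase s(u, v) := by
    intro e he
    obtain ⟨x, y, rfl, hadj, hx, hy⟩ := exists_of_mem_Bset he
    rw [Finset.mem_erase]
    constructor
    · rintro heq
      have : u ∈ s(x, y) := heq ▸ Sym2.mem_mk_left u v
      have hvmem : v ∈ s(x, y) := heq ▸ Sym2.mem_mk_right u v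
      rw [Sym2.mem_iff] at this hvmem
      have hup : u ∈ p ∪ q := Finset.mem_union_left _ hu
      have hvp : v ∈ p ∪ q := Finset.mem_union_right _ hv
      rcases this with rfl | rfl
      · rcases hvmem with rfl | rfl
        · exact (T.loopless.irrefl _ huv).elim
        · exact hy hvp
      · rcases hvmem with rfl | rfl
        · exact hy hup
        · exact (T.loopless.irrefl _ huv).elim
    · rcases Finset.mem_union.1 hx with hxp | hxq
      · exact Finset.mem_union_left _
          (mem_Bset_of_adj hadj hxp (fun h => hy (Finset.mem_union_left _ h)))
      · exact Finset.mem_union_right _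
          (mem_Bset_of_adj hadj hxq (fun h => hy (Finset.mem_union_right _ h)))
  have hA : boundaryEdges T (p ∪ q) ≤ ((Bset T p ∪ Bset T q).erase s(u, v)).card := by
    rw [boundaryEdges_eq]; exact Finset.card_le_card h1
  have hB : ((Bset T p ∪ Bset T q).erase s(u, v)).card + 1 = (Bset T p ∪ Bset T q).card :=
    Finset.card_erase_add_one (Finset.mem_union_left _ he0p)
  have hC : (Bset T p ∪ Bset T q).card + (Bset T p ∩ Bset T q).card
      = (Bset T p).card + (Bset T q).card := Finset.card_union_add_card_inter _ _
  have hD : 1 ≤ (Bset T p ∩ Bset T q).card :=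
    Finset.card_pos.2 ⟨s(u, v), Finset.mem_inter.2 ⟨he0p, he0q⟩⟩
  rw [boundaryEdges_eq, boundaryEdges_eq] at hb4
  have hble2 : boundaryEdges T (p ∪ q) ≤ 2 := by omega
  have hconn' : (T.induce (↑(p ∪ q) : Set V)).Connected :=
    induce_union_connected_of_adj (hconn p hp) (hconn q hq) hu hv huv
  by_contra hle
  push_neg at hle
  exact hmax p hp q hq hpq ⟨u, hu, v, hv, huv⟩
    ⟨by rwa [Finset.card_union_of_disjoint hdisj], hble2, hconn'⟩

lemma card_filter_parts_edge {P : Finset (Finset V)} (f : V → Finset V)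
    (hfP : ∀ v, f v ∈ P) (hfmem : ∀ v, v ∈ f v)
    (hfuniq : ∀ v q, q ∈ P → v ∈ q → q = f v)
    {e : Sym2 V} (he : e ∈ T.edgeFinset) :
    (P.filter fun p => ∃ u ∈ e, ∃ v ∈ e, u ∈ p ∧ v ∉ p).card
      = if ∃ x ∈ e, ∃ y ∈ e, f x ≠ f y then 2 else 0 := by
  induction e with
  | _ a b =>
    have hadj : T.Adj a b := by rwa [SimpleGraph.mem_edgeFinset, SimpleGraph.mem_edgeSet] at he
    have hne : a ≠ b := hadj.ne
    by_cases hff : f a = f b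
    · rw [if_neg, Finset.card_eq_zero.2]
      · rw [Finset.filter_eq_empty_iff]
        rintro p hp ⟨u, hu, v, hv, hup, hvp⟩
        rw [Sym2.mem_iff] at hu hv
        have hpu : p = f u := hfuniq u p hp hup
        rcases hu with rfl | rfl <;> rcases hv with rfl | rfl
        · exact hvp hup
        · exact hvp (by rw [hpu, hff]; exact hfmem v)
        · exact hvp (by rw [hpu, ← hff]; exact hfmem v)
        · exact hvp hup
      · rintro ⟨x, hx, y, hy, hxy⟩
        rw [Sym2.mem_iff] at hx hy
        rcases hx with rfl | rfl <;> rcases hy with rfl | rfl <;>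
          first | exact hxy rfl | exact hxy hff | exact hxy hff.symm
    · rw [if_pos ⟨a, Sym2.mem_mk_left a b, b, Sym2.mem_mk_right a b, hff⟩]
      have : (P.filter fun p => ∃ u ∈ s(a, b), ∃ v ∈ s(a, b), u ∈ p ∧ v ∉ p)
          = {f a, f b} := by
        ext p
        rw [Finset.mem_filter, Finset.mem_insert, Finset.mem_singleton]
        constructor
        · rintro ⟨hp, u, hu, v, hv, hup, hvp⟩
          rw [Sym2.mem_iff] at hu
          rcases hu with rfl | rfl
          · exact Or.inl (hfuniq u p hp hup)
          · exact Or.inr (hfuniq u p hp hup)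
        · rintro (rfl | rfl)
          · refine ⟨hfP a, a, Sym2.mem_mk_left a b, b, Sym2.mem_mk_right a b, hfmem a, ?_⟩
            exact fun h => hff (hfuniq b (f a) (hfP a) h)
          · refine ⟨hfP b, b, Sym2.mem_mk_right a b, a, Sym2.mem_mk_left a b, hfmem b, ?_⟩
            exact fun h => hff ((hfuniq a (f b) (hfP b) h).symm)
      rw [this, Finset.card_pair hff]

end RPAux


open RPAux Finset in
theorem stmt_13 :
    ∃ c : ℕ, ∀ (V : Type) (_ : Fintype V) (T : SimpleGraph V),
      T.Connected → T.IsAcyclic → (∀ v : V, T.degree v ≤ 3) →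
      ∀ (z : ℕ), 1 ≤ z → ∀ P : Finset (Finset V),
        IsRestrictedPartition T z P →
        P.card ≤ c * (Fintype.card V / z + 1) := by
  classical
  refine ⟨36, ?_⟩
  intro V _ T hconnT hacyc hdeg z hz P hRP
  obtain ⟨huniq, hne, hconnP, hcardz, hbd, hmax⟩ := id hRP
  set n := Fintype.card V with hn
  have hn1 : 1 ≤ n := Fintype.card_pos_iff.2 hconnT.nonempty
  obtain ⟨v0⟩ := hconnT.nonempty
  choose f hf using huniq
  have hfP : ∀ v, f v ∈ P := fun v => (hf v).1.1
  have hfmem : ∀ v, v ∈ f v := fun v => (hf v).1.2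
  have hfuniq : ∀ v q, q ∈ P → v ∈ q → q = f v := fun v q hq hv => (hf v).2 q ⟨hq, hv⟩
  have hb3P : ∀ p ∈ P, boundaryEdges T p ≤ 3 := fun p hp => b_le_three hdeg (hbd p hp)
  have hdisjP : ∀ p ∈ P, ∀ q ∈ P, p ≠ q → Disjoint p q := by
    intro p hp q hq hpq
    rw [Finset.disjoint_left]
    intro x hxp hxq
    exact hpq ((hfuniq x p hp hxp).trans (hfuniq x q hq hxq).symm)
  have hsumcard : ∑ p ∈ P, p.card = n := by
    have hbu : P.biUnion id = Finset.univ :=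
      Finset.eq_univ_iff_forall.2 fun x => Finset.mem_biUnion.2 ⟨f x, hfP x, hfmem x⟩
    calc ∑ p ∈ P, p.card = (P.biUnion id).card :=
          (Finset.card_biUnion (fun p hp q hq hpq => hdisjP p hp q hq hpq)).symm
      _ = n := by rw [hbu, hn, Finset.card_univ]
  by_cases hex : ∃ p ∈ P, boundaryEdges T p = 0
  · -- some part has no boundary edge: P is a single part
    obtain ⟨p, hp, hb0⟩ := hex
    have hBempty : Bset T p = ∅ := by
      rw [← Finset.card_eq_zero, ← boundaryEdges_eq]; exact hb0
    have hstep' : ∀ x y : V, T.Adj x y → x ∈ p → y ∈ p := by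
      intro x y hxy hxp
      by_contra hyp
      have h := mem_Bset_of_adj hxy hxp hyp
      rw [hBempty] at h
      exact absurd h (Finset.notMem_empty _)
    obtain ⟨u0, hu0⟩ := hne p hp
    have key : ∀ (x w : V) (wk2 : T.Walk x w), x ∈ p → w ∈ p := by
      intro x w wk2
      induction wk2 with
      | nil => exact id
      | cons h q ih => exact fun hx => ih (hstep' _ _ h hx)
    have hall : ∀ w : V, w ∈ p := by
      intro w
      obtain ⟨wk⟩ := hconnT.preconnected u0 w
      exact key u0 w wk hu0
    have hP1 : P = {p} := by
      apply Finset.eq_singleton_iff_unique_mem.2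
      refine ⟨hp, fun q hq => ?_⟩
      obtain ⟨w, hw⟩ := hne q hq
      exact (hfuniq w q hq hw).trans (hfuniq w p hp (hall w)).symm
    rw [hP1, Finset.card_singleton]
    exact le_trans (Nat.le_add_left 1 (n / z)) (Nat.le_mul_of_pos_left _ (by norm_num))
  · push_neg at hex
    -- main case: every part has at least one boundary edge
    have hfinal : P.card * (z + 1) ≤ 36 * n := by
      -- handshake: sum of boundary degrees = 2 * (P.card - 1)
      set cross := T.edgeFinset.filter (fun e => ∃ x ∈ e, ∃ y ∈ e, f x ≠ f y) with hcrossdef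
      have hsplit := Finset.card_filter_add_card_filter_not
        (s := T.edgeFinset) (p := fun e => ∃ x ∈ e, ∃ y ∈ e, f x ≠ f y)
      have hnoncross : T.edgeFinset.filter (fun e => ¬ ∃ x ∈ e, ∃ y ∈ e, f x ≠ f y)
          = P.biUnion (fun p => T.edgeFinset.filter fun e => ∀ x ∈ e, x ∈ p) := by
        ext e
        induction e with
        | _ a b =>
          simp only [Finset.mem_filter, Finset.mem_biUnion]
          constructor
          · rintro ⟨he, hc⟩
            push_neg at hc
            have hab : f a = f b :=
              hc a (Sym2.mem_mk_left a b) b (Sym2.mem_mk_right a b)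
            refine ⟨f a, hfP a, he, ?_⟩
            intro x hx
            rw [Sym2.mem_iff] at hx
            rcases hx with rfl | rfl
            · exact hfmem x
            · rw [hab]; exact hfmem x
          · rintro ⟨p, hp, he, hin⟩
            refine ⟨he, ?_⟩
            push_neg
            intro x hx y hy
            exact (hfuniq x p hp (hin x hx)).symm.trans (hfuniq y p hp (hin y hy))
      have hbidisj : ∀ p ∈ P, ∀ q ∈ P, p ≠ q →
          Disjoint (T.edgeFinset.filter fun e => ∀ x ∈ e, x ∈ p)
            (T.edgeFinset.filter fun e => ∀ x ∈ e, x ∈ q) := by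
        intro p hp q hq hpq
        rw [Finset.disjoint_left]
        intro e hep heq
        rw [Finset.mem_filter] at hep heq
        exact Finset.disjoint_left.1 (hdisjP p hp q hq hpq)
          (hep.2 _ (Sym2.out_fst_mem e)) (heq.2 _ (Sym2.out_fst_mem e))
      have hintra_card : ∀ p ∈ P,
          (T.edgeFinset.filter fun e => ∀ x ∈ e, x ∈ p).card + 1 = p.card :=
        fun p hp => card_intra hacyc p (hconnP p hp)
      have hsum_intra : ∑ p ∈ P, (T.edgeFinset.filter fun e => ∀ x ∈ e, x ∈ p).card
          + P.card = n := by
        have h := Finset.sum_congr rfl hintra_card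
        rw [Finset.sum_add_distrib, Finset.sum_const, smul_eq_mul, mul_one, hsumcard] at h
        exact h
      have hedges : T.edgeFinset.card + 1 = n := by
        have htree : T.IsTree := ⟨hconnT, hacyc⟩
        rw [hn]
        exact htree.card_edgeFinset
      have hbiu : (P.biUnion (fun p => T.edgeFinset.filter fun e => ∀ x ∈ e, x ∈ p)).card
          = ∑ p ∈ P, (T.edgeFinset.filter fun e => ∀ x ∈ e, x ∈ p).card :=
        Finset.card_biUnion hbidisj
      have hcross_card : cross.card + 1 = P.card := by
        rw [hnoncross, hbiu] at hsplit
        rw [hcrossdef]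
        omega
      have hSb : ∑ p ∈ P, boundaryEdges T p = 2 * cross.card := by
        have hper : ∀ e ∈ T.edgeFinset,
            (P.filter fun p => ∃ u ∈ e, ∃ v ∈ e, u ∈ p ∧ v ∉ p).card
              = if ∃ x ∈ e, ∃ y ∈ e, f x ≠ f y then 2 else 0 :=
          fun e he => card_filter_parts_edge f hfP hfmem hfuniq he
        calc ∑ p ∈ P, boundaryEdges T p
            = ∑ p ∈ P, ∑ e ∈ T.edgeFinset,
                if ∃ u ∈ e, ∃ v ∈ e, u ∈ p ∧ v ∉ p then 1 else 0 := by
              refine Finset.sum_congr rfl fun p hp => ?_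
              rw [boundaryEdges_eq, Bset, Finset.card_filter]
          _ = ∑ e ∈ T.edgeFinset, ∑ p ∈ P,
                (if ∃ u ∈ e, ∃ v ∈ e, u ∈ p ∧ v ∉ p then 1 else 0) := Finset.sum_comm
          _ = ∑ e ∈ T.edgeFinset,
                (P.filter fun p => ∃ u ∈ e, ∃ v ∈ e, u ∈ p ∧ v ∉ p).card := by
              refine Finset.sum_congr rfl fun e he => ?_
              rw [Finset.card_filter]
          _ = ∑ e ∈ T.edgeFinset, if ∃ x ∈ e, ∃ y ∈ e, f x ≠ f y then 2 else 0 :=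
              Finset.sum_congr rfl hper
          _ = ∑ e ∈ cross, 2 := (Finset.sum_filter _ _).symm
          _ = 2 * cross.card := by rw [Finset.sum_const, smul_eq_mul, mul_comm]
      -- classification of parts by boundary degree
      set L := P.filter (fun p => boundaryEdges T p = 1) with hLdef
      set D2 := P.filter (fun p => boundaryEdges T p = 2) with hD2def
      set D3 := P.filter (fun p => boundaryEdges T p = 3) with hD3def
      have hval : ∀ p ∈ P, boundaryEdges T p = 1 ∨ boundaryEdges T p = 2
          ∨ boundaryEdges T p = 3 := by
        intro p hp
        have h1 := hex p hp
        have h3 := hb3P p hp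
        omega
      have hpart : P.card = L.card + D2.card + D3.card := by
        have h12 := Finset.card_filter_add_card_filter_not
          (s := P) (p := fun p => boundaryEdges T p = 1)
        have h23 := Finset.card_filter_add_card_filter_not
          (s := P.filter (fun p => ¬ boundaryEdges T p = 1))
          (p := fun p => boundaryEdges T p = 2)
        rw [Finset.filter_filter, Finset.filter_filter] at h23
        have e2 : P.filter (fun p => ¬ boundaryEdges T p = 1 ∧ boundaryEdges T p = 2) = D2 := by
          rw [hD2def]
          refine Finset.filter_congr fun p hp => ?_
          constructor
          · exact fun h => h.2
          · intro h; exact ⟨by omega, h⟩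
        have e3 : P.filter (fun p => ¬ boundaryEdges T p = 1 ∧ ¬ boundaryEdges T p = 2) = D3 := by
          rw [hD3def]
          refine Finset.filter_congr fun p hp => ?_
          have := hval p hp
          constructor
          · intro h; omega
          · intro h; omega
        rw [e2, e3] at h23
        rw [hLdef]
        omega
      have hsum_split : ∑ p ∈ P, boundaryEdges T p
          = L.card + 2 * D2.card + 3 * D3.card := by
        have h12 := Finset.sum_filter_add_sum_filter_not P
          (fun p => boundaryEdges T p = 1) (fun p => boundaryEdges T p)
        have h23 := Finset.sum_filter_add_sum_filter_not
          (P.filter (fun p => ¬ boundaryEdges T p = 1))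
          (fun p => boundaryEdges T p = 2) (fun p => boundaryEdges T p)
        rw [Finset.filter_filter, Finset.filter_filter] at h23
        have e2 : P.filter (fun p => ¬ boundaryEdges T p = 1 ∧ boundaryEdges T p = 2) = D2 := by
          rw [hD2def]
          refine Finset.filter_congr fun p hp => ?_
          constructor
          · exact fun h => h.2
          · intro h; exact ⟨by omega, h⟩
        have e3 : P.filter (fun p => ¬ boundaryEdges T p = 1 ∧ ¬ boundaryEdges T p = 2) = D3 := by
          rw [hD3def]
          refine Finset.filter_congr fun p hp => ?_
          have := hval p hp
          constructor
          · intro h; omega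
          · intro h; omega
        rw [e2, e3] at h23
        have hsL : ∑ p ∈ L, boundaryEdges T p = L.card := by
          rw [hLdef, Finset.sum_congr rfl (fun p hp => (Finset.mem_filter.1 hp).2),
            Finset.sum_const, smul_eq_mul, mul_one]
        have hsD2 : ∑ p ∈ D2, boundaryEdges T p = 2 * D2.card := by
          rw [hD2def, Finset.sum_congr rfl (fun p hp => (Finset.mem_filter.1 hp).2),
            Finset.sum_const, smul_eq_mul, mul_comm]
        have hsD3 : ∑ p ∈ D3, boundaryEdges T p = 3 * D3.card := by
          rw [hD3def, Finset.sum_congr rfl (fun p hp => (Finset.mem_filter.1 hp).2),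
            Finset.sum_const, smul_eq_mul, mul_comm]
        rw [← hLdef] at h12
        omega
      have hd3 : D3.card + 2 = L.card := by omega
      -- leaf charging
      have hchooseL : ∀ p : Finset V, ∃ (q : Finset V) (x y : V), p ∈ L →
          q ∈ P ∧ q ≠ p ∧ x ∈ p ∧ y ∈ q ∧ T.Adj x y ∧ s(x, y) ∈ Bset T q ∧
            z + 1 ≤ p.card + q.card := by
        intro p
        by_cases hp : p ∈ L
        · have hpP : p ∈ P := (Finset.mem_filter.1 hp).1
          have hb1 : boundaryEdges T p = 1 := (Finset.mem_filter.1 hp).2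
          have hBne : (Bset T p).Nonempty := by
            rw [← Finset.card_pos, ← boundaryEdges_eq, hb1]; norm_num
          obtain ⟨e, he⟩ := hBne
          obtain ⟨x, y, rfl, hadj, hx, hy⟩ := exists_of_mem_Bset he
          refine ⟨f y, x, y, fun _ => ?_⟩
          have hq : f y ∈ P := hfP y
          have hpq : p ≠ f y := fun h => hy (h ▸ hfmem y)
          have hxq : x ∉ f y := by
            intro h
            exact hpq ((hfuniq x p hpP hx).trans (hfuniq x (f y) hq h).symm)
          refine ⟨hq, fun h => hpq h.symm, hx, hfmem y, hadj, ?_, ?_⟩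
          · rw [mem_Bset]
            exact ⟨SimpleGraph.mem_edgeFinset.2 hadj, y, Sym2.mem_mk_right x y, x,
              Sym2.mem_mk_left x y, hfmem y, hxq⟩
          · have hb4 : boundaryEdges T p + boundaryEdges T (f y) ≤ 4 := by
              have := hb3P (f y) hq
              omega
            exact merge_bound hRP hpP hq hpq hx (hfmem y) hadj hb4
        · exact ⟨p, v0, v0, fun h => absurd h hp⟩
      choose qL xL yL hqL using hchooseL
      have hL1 : L.card * (z + 1) ≤ ∑ p ∈ L, (p.card + (qL p).card) := by
        have h := Finset.card_nsmul_le_sum L (fun p => p.card + (qL p).card) (z + 1)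
          (fun p hp => (hqL p hp).2.2.2.2.2.2)
        simpa [smul_eq_mul] using h
      have hL2 : ∑ p ∈ L, p.card ≤ n := by
        rw [← hsumcard]
        exact Finset.sum_le_sum_of_subset (Finset.filter_subset _ _)
      have hL3 : ∑ p ∈ L, (qL p).card ≤ 3 * n := by
        have hmaps : ∀ p ∈ L, qL p ∈ P := fun p hp => (hqL p hp).1
        rw [← Finset.sum_fiberwise_of_maps_to hmaps (fun p => (qL p).card)]
        have hfib : ∀ r ∈ P,
            ∑ p ∈ L.filter (fun p => qL p = r), (qL p).card ≤ 3 * r.card := by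
          intro r hr
          have heq : ∑ p ∈ L.filter (fun p => qL p = r), (qL p).card
              = (L.filter (fun p => qL p = r)).card * r.card := by
            rw [Finset.sum_congr rfl
              (fun p hp => by rw [(Finset.mem_filter.1 hp).2] : ∀ p ∈ _, (qL p).card = r.card)]
            rw [Finset.sum_const, smul_eq_mul]
          rw [heq]
          have hcard3 : (L.filter (fun p => qL p = r)).card ≤ 3 := by
            have hinj : (L.filter (fun p => qL p = r)).card ≤ (Bset T r).card := by
              apply Finset.card_le_card_of_injOn (fun p => s(xL p, yL p))
              · intro p hp
                obtain ⟨hpL, hpr⟩ := Finset.mem_filter.1 hp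
                have h := hqL p hpL
                rw [hpr] at h
                exact h.2.2.2.2.2.1
              · intro p1 h1 p2 h2 heq2
                obtain ⟨h1L, h1r⟩ := Finset.mem_filter.1 h1
                obtain ⟨h2L, h2r⟩ := Finset.mem_filter.1 h2
                have hq1 := hqL p1 h1L
                have hq2 := hqL p2 h2L
                have hp1P : p1 ∈ P := (Finset.mem_filter.1 h1L).1
                have hp2P : p2 ∈ P := (Finset.mem_filter.1 h2L).1
                rw [Sym2.eq_iff] at heq2
                rcases heq2 with ⟨hxx, hyy⟩ | ⟨hxy, hyx⟩
                · exact (hfuniq (xL p1) p1 hp1P hq1.2.2.1).trans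
                    (hxx ▸ (hfuniq (xL p2) p2 hp2P hq2.2.2.1).symm)
                · exfalso
                  -- xL p1 = yL p2 : xL p1 ∈ p1 and yL p2 ∈ qL p2 = r, so p1 = r
                  have hy2r : yL p2 ∈ r := h2r ▸ hq2.2.2.2.1
                  have hx1p1 : xL p1 ∈ p1 := hq1.2.2.1
                  have : p1 = r := by
                    have hrP : r ∈ P := hr
                    exact (hfuniq (xL p1) p1 hp1P hx1p1).trans
                      (hxy ▸ (hfuniq (yL p2) r hrP hy2r).symm)
                  -- but qL p1 = r ≠ p1
                  exact (h1r ▸ hq1.2.1 : r ≠ p1) this.symm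
            calc (L.filter (fun p => qL p = r)).card ≤ (Bset T r).card := hinj
              _ = boundaryEdges T r := (boundaryEdges_eq r).symm
              _ ≤ 3 := hb3P r hr
          exact Nat.mul_le_mul_right _ hcard3
        calc ∑ r ∈ P, ∑ p ∈ L.filter (fun p => qL p = r), (qL p).card
            ≤ ∑ r ∈ P, 3 * r.card := Finset.sum_le_sum hfib
          _ = 3 * n := by rw [← Finset.mul_sum, hsumcard]
      have hL4 : L.card * (z + 1) ≤ 4 * n := by
        rw [Finset.sum_add_distrib] at hL1
        omega
      -- adjacent pairs of degree-2 parts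
      set M := (D2 ×ˢ D2).filter
        (fun x : Finset V × Finset V => x.1 ≠ x.2 ∧ ∃ u ∈ x.1, ∃ v ∈ x.2, T.Adj u v) with hMdef
      have hMmem : ∀ x ∈ M, x.1 ∈ D2 ∧ x.2 ∈ D2 ∧ x.1 ≠ x.2
          ∧ ∃ u ∈ x.1, ∃ v ∈ x.2, T.Adj u v := by
        intro x hx
        rw [hMdef, Finset.mem_filter, Finset.mem_product] at hx
        exact ⟨hx.1.1, hx.1.2, hx.2.1, hx.2.2⟩
      have hD2P : ∀ p ∈ D2, p ∈ P := fun p hp => (Finset.mem_filter.1 hp).1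
      have hD2b2 : ∀ p ∈ D2, boundaryEdges T p = 2 := fun p hp => (Finset.mem_filter.1 hp).2
      have hchooseM : ∀ x : Finset V × Finset V, ∃ a b : V, x ∈ M →
          a ∈ x.1 ∧ b ∈ x.2 ∧ T.Adj a b := by
        intro x
        by_cases hx : x ∈ M
        · obtain ⟨_, _, _, u, hu, v, hv, huv⟩ := hMmem x hx
          exact ⟨u, v, fun _ => ⟨hu, hv, huv⟩⟩
        · exact ⟨v0, v0, fun h => absurd h hx⟩
      choose aM bM haM using hchooseM
      have hMz : ∀ x ∈ M, z + 1 ≤ x.1.card + x.2.card := by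
        intro x hx
        obtain ⟨h1, h2, hne12, _⟩ := hMmem x hx
        obtain ⟨ha, hb, hab⟩ := haM x hx
        have hb4 : boundaryEdges T x.1 + boundaryEdges T x.2 ≤ 4 := by
          rw [hD2b2 _ h1, hD2b2 _ h2]
        exact merge_bound hRP (hD2P _ h1) (hD2P _ h2) hne12 ha hb hab hb4
      have hMsum : M.card * (z + 1) ≤ ∑ x ∈ M, x.1.card + ∑ x ∈ M, x.2.card := by
        have h := Finset.card_nsmul_le_sum M (fun x => x.1.card + x.2.card) (z + 1) hMz
        rw [Finset.sum_add_distrib] at h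
        simpa [smul_eq_mul] using h
      have hD2sum : ∑ p ∈ D2, p.card ≤ n := by
        rw [← hsumcard]
        exact Finset.sum_le_sum_of_subset (Finset.filter_subset _ _)
      have hMfib : ∀ (pr : Finset V × Finset V → Finset V), (∀ x ∈ M, pr x ∈ D2) →
          (∀ r ∈ D2, (M.filter (fun x => pr x = r)).card ≤ 2) →
          ∑ x ∈ M, (pr x).card ≤ 2 * n := by
        intro pr hmaps hfib2
        rw [← Finset.sum_fiberwise_of_maps_to hmaps (fun x => (pr x).card)]
        have hfib : ∀ r ∈ D2,
            ∑ x ∈ M.filter (fun x => pr x = r), (pr x).card ≤ 2 * r.card := by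
          intro r hr
          have heqf : ∑ x ∈ M.filter (fun x => pr x = r), (pr x).card
              = (M.filter (fun x => pr x = r)).card * r.card := by
            rw [Finset.sum_congr rfl
              (fun x hx => by rw [(Finset.mem_filter.1 hx).2] : ∀ x ∈ _, (pr x).card = r.card)]
            rw [Finset.sum_const, smul_eq_mul]
          rw [heqf]
          exact Nat.mul_le_mul_right _ (hfib2 r hr)
        calc ∑ r ∈ D2, ∑ x ∈ M.filter (fun x => pr x = r), (pr x).card
            ≤ ∑ r ∈ D2, 2 * r.card := Finset.sum_le_sum hfib
          _ = 2 * ∑ p ∈ D2, p.card := by rw [← Finset.mul_sum]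
          _ ≤ 2 * n := Nat.mul_le_mul_left _ hD2sum
      have hMfst : ∑ x ∈ M, x.1.card ≤ 2 * n := by
        apply hMfib (fun x => x.1) (fun x hx => (hMmem x hx).1)
        intro r hr
        have hinj : (M.filter (fun x => x.1 = r)).card ≤ (Bset T r).card := by
          apply Finset.card_le_card_of_injOn (fun x => s(aM x, bM x))
          · intro x hx
            obtain ⟨hxM, hxr⟩ := Finset.mem_filter.1 hx
            obtain ⟨ha, hb, hab⟩ := haM x hxM
            obtain ⟨h1, h2, hne12, _⟩ := hMmem x hxM
            have hbnr : bM x ∉ r := by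
              intro hmem
              have : x.2 = r := by
                exact (hfuniq (bM x) x.2 (hD2P _ h2) hb).trans
                  (hfuniq (bM x) r (hD2P _ (hxr ▸ h1)) hmem).symm
              exact hne12 (hxr.trans this.symm)
            exact mem_Bset_of_adj hab (hxr ▸ ha) hbnr
          · intro x1 hx1 x2 hx2 heq2
            obtain ⟨h1M, h1r⟩ := Finset.mem_filter.1 hx1
            obtain ⟨h2M, h2r⟩ := Finset.mem_filter.1 hx2
            obtain ⟨ha1, hb1, hab1⟩ := haM x1 h1M
            obtain ⟨ha2, hb2, hab2⟩ := haM x2 h2M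
            obtain ⟨h11, h12, hne1, _⟩ := hMmem x1 h1M
            obtain ⟨h21, h22, hne2, _⟩ := hMmem x2 h2M
            rw [Sym2.eq_iff] at heq2
            rcases heq2 with ⟨haa, hbb⟩ | ⟨hab', hba⟩
            · have hsnd : x1.2 = x2.2 :=
                (hfuniq (bM x1) x1.2 (hD2P _ h12) hb1).trans
                  (hbb ▸ (hfuniq (bM x2) x2.2 (hD2P _ h22) hb2).symm)
              exact Prod.ext (h1r.trans h2r.symm) hsnd
            · exfalso
              -- aM x1 = bM x2 : aM x1 ∈ x1.1 = r, bM x2 ∈ x2.2, so x2.2 = r = x2.1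
              have : x2.2 = r :=
                (hfuniq (bM x2) x2.2 (hD2P _ h22) hb2).trans
                  (hab' ▸ (hfuniq (aM x1) r (hD2P _ (h1r ▸ h11)) (h1r ▸ ha1)).symm)
              exact hne2 (h2r.trans this.symm)
        calc (M.filter (fun x => x.1 = r)).card ≤ (Bset T r).card := hinj
          _ = boundaryEdges T r := (boundaryEdges_eq r).symm
          _ ≤ 2 := (hD2b2 r hr).le
      have hMsnd : ∑ x ∈ M, x.2.card ≤ 2 * n := by
        apply hMfib (fun x => x.2) (fun x hx => (hMmem x hx).2.1)
        intro r hr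
        have hinj : (M.filter (fun x => x.2 = r)).card ≤ (Bset T r).card := by
          apply Finset.card_le_card_of_injOn (fun x => s(aM x, bM x))
          · intro x hx
            obtain ⟨hxM, hxr⟩ := Finset.mem_filter.1 hx
            obtain ⟨ha, hb, hab⟩ := haM x hxM
            obtain ⟨h1, h2, hne12, _⟩ := hMmem x hxM
            have hanr : aM x ∉ r := by
              intro hmem
              have : x.1 = r := by
                exact (hfuniq (aM x) x.1 (hD2P _ h1) ha).trans
                  (hfuniq (aM x) r (hD2P _ (hxr ▸ h2)) hmem).symm
              exact hne12 (this.trans hxr.symm)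
            rw [Finset.mem_coe, mem_Bset]
            exact ⟨SimpleGraph.mem_edgeFinset.2 hab, bM x, Sym2.mem_mk_right _ _, aM x,
              Sym2.mem_mk_left _ _, hxr ▸ hb, hanr⟩
          · intro x1 hx1 x2 hx2 heq2
            obtain ⟨h1M, h1r⟩ := Finset.mem_filter.1 hx1
            obtain ⟨h2M, h2r⟩ := Finset.mem_filter.1 hx2
            obtain ⟨ha1, hb1, hab1⟩ := haM x1 h1M
            obtain ⟨ha2, hb2, hab2⟩ := haM x2 h2M
            obtain ⟨h11, h12, hne1, _⟩ := hMmem x1 h1M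
            obtain ⟨h21, h22, hne2, _⟩ := hMmem x2 h2M
            rw [Sym2.eq_iff] at heq2
            rcases heq2 with ⟨haa, hbb⟩ | ⟨hab', hba⟩
            · have hfst : x1.1 = x2.1 :=
                (hfuniq (aM x1) x1.1 (hD2P _ h11) ha1).trans
                  (haa ▸ (hfuniq (aM x2) x2.1 (hD2P _ h21) ha2).symm)
              exact Prod.ext hfst (h1r.trans h2r.symm)
            · exfalso
              -- bM x1 = aM x2 : bM x1 ∈ x1.2 = r, aM x2 ∈ x2.1, so x2.1 = r = x2.2
              have : x2.1 = r :=
                (hfuniq (aM x2) x2.1 (hD2P _ h21) ha2).trans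
                  (hba ▸ (hfuniq (bM x1) r (hD2P _ (h1r ▸ h12)) (h1r ▸ hb1)).symm)
              exact hne2 (this.trans h2r.symm)
        calc (M.filter (fun x => x.2 = r)).card ≤ (Bset T r).card := hinj
          _ = boundaryEdges T r := (boundaryEdges_eq r).symm
          _ ≤ 2 := (hD2b2 r hr).le
      have hM4 : M.card * (z + 1) ≤ 4 * n := by omega
      -- split D2 into parts with / without a D2 neighbor
      have hD2split := Finset.card_filter_add_card_filter_not
        (s := D2) (p := fun p => ∃ q, (p, q) ∈ M)
      have hD2a : (D2.filter (fun p => ∃ q, (p, q) ∈ M)).card ≤ M.card := by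
        have hchooseA : ∀ p : Finset V, ∃ q, (∃ q', (p, q') ∈ M) → (p, q) ∈ M := by
          intro p
          by_cases h : ∃ q', (p, q') ∈ M
          · obtain ⟨q, hq⟩ := h
            exact ⟨q, fun _ => hq⟩
          · exact ⟨p, fun h' => absurd h' h⟩
        choose gA hgA using hchooseA
        apply Finset.card_le_card_of_injOn (fun p => (p, gA p))
        · intro p hp
          exact hgA p (Finset.mem_filter.1 hp).2
        · intro p1 _ p2 _ h
          exact congrArg Prod.fst h
      have hND2 : (P.filter (fun p => ¬ boundaryEdges T p = 2)).card
          = L.card + D3.card := by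
        have h := Finset.card_filter_add_card_filter_not
          (s := P) (p := fun p => boundaryEdges T p = 2)
        rw [← hD2def] at h
        omega
      have hD2b : (D2.filter (fun p => ¬ ∃ q, (p, q) ∈ M)).card
          ≤ 3 * (L.card + D3.card) := by
        have hchooseB : ∀ p : Finset V, ∃ x y : V, p ∈ D2.filter (fun p => ¬ ∃ q, (p, q) ∈ M) →
            x ∈ p ∧ y ∉ p ∧ T.Adj x y ∧ ¬ boundaryEdges T (f y) = 2 ∧
              s(x, y) ∈ Bset T (f y) := by
          intro p
          by_cases hp : p ∈ D2.filter (fun p => ¬ ∃ q, (p, q) ∈ M)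
          · obtain ⟨hpD2, hno⟩ := Finset.mem_filter.1 hp
            have hpP : p ∈ P := hD2P p hpD2
            have hBne : (Bset T p).Nonempty := by
              rw [← Finset.card_pos, ← boundaryEdges_eq, hD2b2 p hpD2]; norm_num
            obtain ⟨e, he⟩ := hBne
            obtain ⟨x, y, rfl, hadj, hx, hy⟩ := exists_of_mem_Bset he
            refine ⟨x, y, fun _ => ?_⟩
            have hq : f y ∈ P := hfP y
            have hpq : p ≠ f y := fun h => hy (h ▸ hfmem y)
            have hxq : x ∉ f y := by
              intro h
              exact hpq ((hfuniq x p hpP hx).trans (hfuniq x (f y) hq h).symm)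
            have hfy2 : ¬ boundaryEdges T (f y) = 2 := by
              intro h2
              apply hno
              refine ⟨f y, ?_⟩
              rw [hMdef, Finset.mem_filter, Finset.mem_product]
              refine ⟨⟨hpD2, ?_⟩, hpq, x, hx, y, hfmem y, hadj⟩
              rw [hD2def, Finset.mem_filter]
              exact ⟨hq, h2⟩
            refine ⟨hx, hy, hadj, hfy2, ?_⟩
            rw [mem_Bset]
            exact ⟨SimpleGraph.mem_edgeFinset.2 hadj, y, Sym2.mem_mk_right x y, x,
              Sym2.mem_mk_left x y, hfmem y, hxq⟩
          · exact ⟨v0, v0, fun h => absurd h hp⟩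
        choose xB yB hB using hchooseB
        have hcard := Finset.card_le_card_of_injOn
          (s := D2.filter (fun p => ¬ ∃ q, (p, q) ∈ M))
          (t := (P.filter (fun p => ¬ boundaryEdges T p = 2)).biUnion (Bset T))
          (fun p => s(xB p, yB p)) ?_ ?_
        · refine le_trans hcard (le_trans (Finset.card_biUnion_le) ?_)
          rw [← hND2]
          calc ∑ r ∈ P.filter (fun p => ¬ boundaryEdges T p = 2), (Bset T r).card
              ≤ ∑ r ∈ P.filter (fun p => ¬ boundaryEdges T p = 2), 3 := by
                refine Finset.sum_le_sum fun r hr => ?_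
                rw [← boundaryEdges_eq]
                exact hb3P r (Finset.mem_filter.1 hr).1
            _ = 3 * (P.filter (fun p => ¬ boundaryEdges T p = 2)).card := by
                rw [Finset.sum_const, smul_eq_mul, mul_comm]
        · intro p hp
          obtain ⟨hx, hy, hadj, hfy2, hBm⟩ := hB p hp
          apply Finset.mem_biUnion.2
          exact ⟨f (yB p), Finset.mem_filter.2 ⟨hfP (yB p), hfy2⟩, hBm⟩
        · intro p1 hp1 p2 hp2 heq2
          obtain ⟨hx1, hy1, hadj1, hfy1, hB1⟩ := hB p1 hp1
          obtain ⟨hx2, hy2, hadj2, hfy2, hB2⟩ := hB p2 hp2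
          have hp1P : p1 ∈ P := hD2P p1 (Finset.mem_filter.1 hp1).1
          have hp2P : p2 ∈ P := hD2P p2 (Finset.mem_filter.1 hp2).1
          rw [Sym2.eq_iff] at heq2
          rcases heq2 with ⟨hxx, hyy⟩ | ⟨hxy, hyx⟩
          · exact (hfuniq (xB p1) p1 hp1P hx1).trans
              (hxx ▸ (hfuniq (xB p2) p2 hp2P hx2).symm)
          · exfalso
            -- xB p2 = yB p1 : xB p2 ∈ p2 and p2 = f (xB p2) = f (yB p1), which has b ≠ 2
            have h2eq : p2 = f (yB p1) := by
              rw [hyx]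
              exact hfuniq (xB p2) p2 hp2P hx2
            have hb2 : boundaryEdges T p2 = 2 := hD2b2 p2 (Finset.mem_filter.1 hp2).1
            rw [h2eq] at hb2
            exact hfy1 hb2
      -- final arithmetic
      have hmle : P.card ≤ M.card + 8 * L.card := by omega
      have h1 : P.card * (z + 1) ≤ (M.card + 8 * L.card) * (z + 1) :=
        Nat.mul_le_mul_right _ hmle
      have h2 : (M.card + 8 * L.card) * (z + 1)
          = M.card * (z + 1) + 8 * (L.card * (z + 1)) := by ring
      omega
    have hdiv : n ≤ z * (n / z + 1) := by
      have h1 := Nat.div_add_mod n z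
      have h2 : n % z < z := Nat.mod_lt _ (by omega)
      have h3 : z * (n / z + 1) = z * (n / z) + z := by ring
      omega
    have hstep : P.card * z ≤ 36 * (z * (n / z + 1)) :=
      le_trans (le_trans (Nat.mul_le_mul (le_refl P.card) (by omega)) hfinal)
        (Nat.mul_le_mul (le_refl 36) hdiv)
    have heq : 36 * (z * (n / z + 1)) = z * (36 * (n / z + 1)) := by ring
    rw [heq, mul_comm P.card z] at hstep
    exact Nat.le_of_mul_le_mul_left hstep (by omega)
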